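/- (Orthogonal Bisector Property) Let S = {v_1, ..., v_n} be a finite nonempty set of points in ℝ^m and p ∈ ℝ^m. Suppose p' ∈ conv(S) is a p-witness, i.e., d(p', v_i) < d(p, v_i) for all i = 1, ..., n. Set c = p - p' and γ = (1/2)(‖p‖² - ‖p'‖²). Then cᵀp > γ, and cᵀx < γ for every x ∈ conv(S); in particular, the hyperplane H = {x ∈ ℝ^m : cᵀx = γ} (the orthogonal bisector of the segment pp') separates p from conv(S). -/

import Mathlib

/-- **Orthogonal Bisector Property**. If `p'` is a `p`-witness, then with `c = p - p'` and
`γ = (‖p‖² - ‖p'‖²)/2`, we have `⟪c, p⟫ > γ` and `⟪c, x⟫ < γ` for every `x ∈ conv(S)`;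
i.e. the orthogonal bisector of segment `p p'` separates `p` from `conv(S)`. -/
theorem orthogonal_bisector_property {m n : ℕ} (hn : 0 < n)
    (v : Fin n → EuclideanSpace ℝ (Fin m)) (p p' : EuclideanSpace ℝ (Fin m))
    (hp' : p' ∈ convexHull ℝ (Set.range v))
    (hwit : ∀ i : Fin n, dist p' (v i) < dist p (v i)) :
    inner ℝ (p - p') p > (‖p‖ ^ 2 - ‖p'‖ ^ 2) / 2 ∧
      ∀ x ∈ convexHull ℝ (Set.range v),
        inner ℝ (p - p') x < (‖p‖ ^ 2 - ‖p'‖ ^ 2) / 2 := by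
  set γ : ℝ := (‖p‖ ^ 2 - ‖p'‖ ^ 2) / 2 with hγ
  have hkey : ∀ x ∈ Set.range v, (inner ℝ (p - p') x : ℝ) < γ := by
    rintro x ⟨i, rfl⟩
    have h := hwit i
    rw [dist_eq_norm, dist_eq_norm] at h
    have h2 : ‖p' - v i‖ ^ 2 < ‖p - v i‖ ^ 2 := by
      exact pow_lt_pow_left₀ h (norm_nonneg _) (by norm_num)
    rw [@norm_sub_sq_real, @norm_sub_sq_real] at h2
    rw [inner_sub_left]
    linarith
  have hconv : ∀ x ∈ convexHull ℝ (Set.range v), (inner ℝ (p - p') x : ℝ) < γ := by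
    intro x hx
    have : convexHull ℝ (Set.range v) ⊆ {w | (inner ℝ (p - p') w : ℝ) < γ} := by
      apply convexHull_min hkey
      exact convex_halfSpace_lt ⟨fun a b => inner_add_right _ _ _,
        fun r a => real_inner_smul_right _ _ _⟩ γ
    exact this hx
  refine ⟨?_, hconv⟩
  have hp'lt : (inner ℝ (p - p') p' : ℝ) < γ := hconv p' hp'
  have hsum : (inner ℝ (p - p') p : ℝ) + inner ℝ (p - p') p' = 2 * γ := by
    rw [hγ]
    have := @norm_sub_sq_real (EuclideanSpace ℝ (Fin m)) _ _ p p'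
    rw [inner_sub_left, inner_sub_left, real_inner_comm p' p,
      real_inner_self_eq_norm_sq, real_inner_self_eq_norm_sq]
    ring
  linarith
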